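/- For every graph G on n vertices that is not the edgeless graph E_n, we have avi(G) < n/2 = avi(E_n). -/

import Mathlib

open Finset
open scoped Classical

/-- The finite set of independent vertex sets of `G` (including the empty set). -/
noncomputable def indepSets {V : Type*} [Fintype V] (G : SimpleGraph V) : Finset (Finset V) :=
  univ.filter fun s => ∀ u ∈ s, ∀ v ∈ s, ¬ G.Adj u v

/-- `I(G)`: the number of independent vertex sets of `G`. -/
noncomputable def numIndep {V : Type*} [Fintype V] (G : SimpleGraph V) : ℕ :=
  (indepSets G).card

/-- `T(G)`: the sum of the sizes of all independent vertex sets of `G`. -/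
noncomputable def totIndep {V : Type*} [Fintype V] (G : SimpleGraph V) : ℕ :=
  ∑ s ∈ indepSets G, s.card

/-- `avi(G) = T(G)/I(G)`: the average size of an independent vertex set of `G`. -/
noncomputable def avi {V : Type*} [Fintype V] (G : SimpleGraph V) : ℝ :=
  (totIndep G : ℝ) / (numIndep G : ℝ)

lemma indep_mem {V : Type*} [Fintype V] {G : SimpleGraph V} {s : Finset V} :
    s ∈ indepSets G ↔ ∀ u ∈ s, ∀ v ∈ s, ¬ G.Adj u v := by
  simp [indepSets]

lemma erase_mem_indep {V : Type*} [Fintype V] {G : SimpleGraph V} {s : Finset V}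
    (hs : s ∈ indepSets G) (v : V) : s.erase v ∈ indepSets G := by
  rw [indep_mem] at hs ⊢
  exact fun a ha b hb => hs a (mem_of_mem_erase ha) b (mem_of_mem_erase hb)

lemma empty_mem_indep {V : Type*} [Fintype V] (G : SimpleGraph V) :
    (∅ : Finset V) ∈ indepSets G := by
  simp [indep_mem]

lemma totIndep_eq {V : Type*} [Fintype V] (G : SimpleGraph V) :
    totIndep G = ∑ v : V, ((indepSets G).filter (fun s => v ∈ s)).card := by
  unfold totIndep
  simp only [Finset.card_filter]
  rw [Finset.sum_comm]
  refine Finset.sum_congr rfl fun s _ => ?_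
  simp [Finset.sum_boole, Finset.filter_mem_eq_inter]

lemma key_le {V : Type*} [Fintype V] (G : SimpleGraph V) (v : V) :
    ((indepSets G).filter (fun s => v ∈ s)).card ≤
      ((indepSets G).filter (fun s => v ∉ s)).card := by
  apply Finset.card_le_card_of_injOn (fun s => s.erase v)
  · intro s hs
    simp only [Finset.mem_coe, Finset.mem_filter] at hs ⊢
    exact ⟨erase_mem_indep hs.1 v, notMem_erase v s⟩
  · intro s hs t ht h
    simp only [Finset.coe_filter, Set.mem_setOf_eq] at hs ht
    have := congrArg (insert v) h
    rwa [Finset.insert_erase hs.2, Finset.insert_erase ht.2] at this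

lemma key_lt {V : Type*} [Fintype V] (G : SimpleGraph V) {u w : V} (huw : G.Adj u w) :
    ((indepSets G).filter (fun s => w ∈ s)).card <
      ((indepSets G).filter (fun s => w ∉ s)).card := by
  have hu : ({u} : Finset V) ∈ (indepSets G).filter (fun s => w ∉ s) := by
    simp only [Finset.mem_filter, indep_mem, Finset.mem_singleton]
    refine ⟨fun a ha b hb => ?_, fun h => G.ne_of_adj huw h.symm⟩
    subst ha; subst hb; exact fun h => G.loopless.irrefl _ h
  have h1 : ((indepSets G).filter (fun s => w ∈ s)).card ≤
      (((indepSets G).filter (fun s => w ∉ s)).erase {u}).card := by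
    apply Finset.card_le_card_of_injOn (fun s => s.erase w)
    · intro s hs
      simp only [Finset.mem_coe, Finset.mem_filter] at hs ⊢
      refine Finset.mem_erase.mpr ⟨?_, ?_⟩
      · intro h
        have hus : u ∈ s := by
          have := h ▸ Finset.mem_singleton_self u
          exact Finset.mem_of_mem_erase this
        exact (indep_mem.mp hs.1) u hus w hs.2 huw
      · exact Finset.mem_filter.mpr ⟨erase_mem_indep hs.1 w, notMem_erase w s⟩
    · intro s hs t ht h
      simp only [Finset.coe_filter, Set.mem_setOf_eq] at hs ht
      have := congrArg (insert w) h
      rwa [Finset.insert_erase hs.2, Finset.insert_erase ht.2] at this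
  calc ((indepSets G).filter (fun s => w ∈ s)).card
      ≤ (((indepSets G).filter (fun s => w ∉ s)).erase {u}).card := h1
    _ < ((indepSets G).filter (fun s => w ∉ s)).card :=
        Finset.card_erase_lt_of_mem hu

lemma filter_add {V : Type*} [Fintype V] (G : SimpleGraph V) (v : V) :
    ((indepSets G).filter (fun s => v ∈ s)).card +
      ((indepSets G).filter (fun s => v ∉ s)).card = numIndep G :=
  Finset.card_filter_add_card_filter_not _

lemma main_ineq {V : Type*} [Fintype V] (G : SimpleGraph V) (hG : G ≠ ⊥) :
    2 * totIndep G < Fintype.card V * numIndep G := by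
  obtain ⟨u, w, huw⟩ : ∃ u w, G.Adj u w := by
    by_contra h
    push_neg at h
    exact hG (by ext a b; simp [h a b])
  have hrhs : Fintype.card V * numIndep G = ∑ _v : V, numIndep G := by
    simp [Finset.sum_const, mul_comm]
  rw [totIndep_eq, Finset.mul_sum, hrhs]
  apply Finset.sum_lt_sum
  · intro v _
    have := filter_add G v
    have := key_le G v
    omega
  · refine ⟨w, Finset.mem_univ w, ?_⟩
    have := filter_add G w
    have := key_lt G huw
    omega

lemma key_eq {V : Type*} [Fintype V] (v : V) :
    ((indepSets (⊥ : SimpleGraph V)).filter (fun s => v ∈ s)).card =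
      ((indepSets (⊥ : SimpleGraph V)).filter (fun s => v ∉ s)).card := by
  apply le_antisymm (key_le _ v)
  apply Finset.card_le_card_of_injOn (fun s => insert v s)
  · intro s hs
    simp only [Finset.mem_coe, Finset.mem_filter, indep_mem] at hs ⊢
    exact ⟨fun a _ b _ => by simp, Finset.mem_insert_self v s⟩
  · intro s hs t ht h
    simp only [Finset.coe_filter, Set.mem_setOf_eq] at hs ht
    have := congrArg (Finset.erase · v) h
    simpa [Finset.erase_insert hs.2, Finset.erase_insert ht.2] using this

lemma bot_eq {n : ℕ} : 2 * totIndep (⊥ : SimpleGraph (Fin n)) = n * numIndep (⊥ : SimpleGraph (Fin n)) := by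
  have hrhs : n * numIndep (⊥ : SimpleGraph (Fin n)) = ∑ _v : Fin n, numIndep (⊥ : SimpleGraph (Fin n)) := by
    simp [Finset.sum_const, mul_comm]
  rw [totIndep_eq, Finset.mul_sum, hrhs]
  apply Finset.sum_congr rfl
  intro v _
  have h := filter_add (⊥ : SimpleGraph (Fin n)) v
  have := key_eq (V := Fin n) v
  omega

lemma numIndep_pos {V : Type*} [Fintype V] (G : SimpleGraph V) : 0 < numIndep G :=
  Finset.card_pos.mpr ⟨∅, empty_mem_indep G⟩

theorem avi_lt_edgeless {V : Type*} [Fintype V] (G : SimpleGraph V) (n : ℕ)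
    (hn : Fintype.card V = n) (hG : G ≠ ⊥) :
    avi G < n / 2 ∧ (n : ℝ) / 2 = avi (⊥ : SimpleGraph (Fin n)) := by
  constructor
  · have h := main_ineq G hG
    rw [hn] at h
    have hI : (0 : ℝ) < (numIndep G : ℝ) := by exact_mod_cast numIndep_pos G
    rw [avi, div_lt_div_iff₀ hI (by norm_num : (0:ℝ) < 2)]
    have : (2 * totIndep G : ℝ) < (n * numIndep G : ℝ) := by exact_mod_cast h
    linarith
  · have h := bot_eq (n := n)
    have hI : (0 : ℝ) < (numIndep (⊥ : SimpleGraph (Fin n)) : ℝ) := by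
      exact_mod_cast numIndep_pos _
    rw [avi, eq_div_iff (ne_of_gt hI)]
    have : (2 * totIndep (⊥ : SimpleGraph (Fin n)) : ℝ)
        = (n * numIndep (⊥ : SimpleGraph (Fin n)) : ℝ) := by exact_mod_cast h
    linarith
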